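/- Theorem 4.1 (eigenvalue bound): Fix reals h > 0, Δt with 0 < Δt < h, k, and c^e ≥ 0, c^o ≥ 0. Let E : ℝ → ℝ be E(c) = (exp(c) − 1)/c for c ≠ 0 and E(0) = 1; set d^e = exp(−c^e·Δt/2), d^o = exp(−c^o·Δt/2), f^e = −i·(Δt/h)·E(−c^e·Δt/2)·sin(k·h/2), f^o = −i·(Δt/h)·E(−c^o·Δt/2)·sin(k·h/2), and let G be the 2×2 complex matrix [[(d^e)² + (d^e+1)·f^e·f^o, d^o·(d^e+1)·f^e],[(d^o + (d^e)²)·f^o + (d^e+1)·f^e·(f^o)², (d^o)² + d^o·(d^e+1)·f^e·f^o]]. Then every eigenvalue λ of G satisfies |λ| ≤ 1. -/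

import Mathlib

open Matrix Polynomial

/-- `E c = (exp c - 1)/c` for `c ≠ 0`, `E 0 = 1`. -/
noncomputable def E : ℝ → ℝ := fun c => if c = 0 then 1 else (Real.exp c - 1) / c

lemma charpoly_eval_fin_two (N : Matrix (Fin 2) (Fin 2) ℂ) (x : ℂ) :
    (N.charpoly).eval x = (x - N 0 0) * (x - N 1 1) - N 0 1 * N 1 0 := by
  have : (N.charpoly).eval x = (Polynomial.evalRingHom x) (N.charmatrix).det := rfl
  rw [this, RingHom.map_det, Matrix.det_fin_two]
  simp [RingHom.mapMatrix_apply, Matrix.map_apply, Matrix.charmatrix_apply_eq,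
    Matrix.charmatrix_apply_ne _ (0 : Fin 2) (1 : Fin 2) (by decide),
    Matrix.charmatrix_apply_ne _ (1 : Fin 2) (0 : Fin 2) (by decide)]

/-- Schur-type bound: a complex root of `X^2 - T X + D` with real coefficients
satisfying `D ≤ 1` and `|T| ≤ 1 + D` lies in the closed unit disk. -/
lemma quad_root_bound (T D : ℝ) (hD : D ≤ 1) (h1 : T ≤ 1 + D) (h2 : -(1 + D) ≤ T)
    (lam : ℂ) (hroot : lam ^ 2 - (T : ℂ) * lam + (D : ℂ) = 0) : ‖lam‖ ≤ 1 := by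
  by_cases him : lam.im = 0
  · -- real root
    have hl : lam = (lam.re : ℂ) := Complex.ext (by simp) (by simp [him])
    set x := lam.re with hx
    have hre : x ^ 2 - T * x + D = 0 := by
      have := hroot
      rw [hl] at this
      exact_mod_cast this
    rw [hl, Complex.norm_real, Real.norm_eq_abs, abs_le]
    constructor
    · nlinarith [sq_nonneg (x + 1), sq_nonneg (x + D)]
    · nlinarith [sq_nonneg (x - 1), sq_nonneg (x - D)]
  · -- complex root: the conjugate is the other root, product is D
    set μ := (starRingEnd ℂ) lam with hμ
    have hconj : μ ^ 2 - (T : ℂ) * μ + (D : ℂ) = 0 := by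
      have := congrArg (starRingEnd ℂ) hroot
      simpa [hμ, Complex.conj_ofReal] using this
    have hne : lam - μ ≠ 0 := by
      rw [sub_ne_zero]
      intro hEq
      exact him (Complex.conj_eq_iff_im.mp hEq.symm)
    have hfac : (lam - μ) * (lam + μ - T) = 0 := by linear_combination hroot - hconj
    have hsum : lam + μ = (T : ℂ) := by
      rcases mul_eq_zero.mp hfac with h | h
      · exact absurd h hne
      · linear_combination h
    have hprod : lam * μ = (D : ℂ) := by linear_combination lam * hsum - hroot
    have hnsq : (Complex.normSq lam : ℂ) = (D : ℂ) := by
      rw [← Complex.mul_conj]; exact hprod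
    have : Complex.normSq lam = D := by exact_mod_cast hnsq
    rw [Complex.norm_def, Real.sqrt_le_one, this]
    exact hD

lemma E_nonneg {x : ℝ} (hx : 0 ≤ x) : 0 ≤ E (-x) := by
  unfold E
  split_ifs with h
  · norm_num
  · have hx' : 0 < x := lt_of_le_of_ne hx (by intro h'; exact h (by rw [← h']; ring))
    have : Real.exp (-x) ≤ 1 := Real.exp_le_one_iff.mpr (by linarith)
    rw [div_nonneg_iff]
    right
    constructor <;> linarith

lemma sinh_le_mul_cosh (x : ℝ) (hx : 0 ≤ x) : Real.sinh x ≤ x * Real.cosh x := by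
  have hmono : Monotone (fun x : ℝ => x * Real.cosh x - Real.sinh x) := by
    apply monotone_of_deriv_nonneg
    · exact (differentiable_id.mul Real.differentiable_cosh).sub Real.differentiable_sinh
    · intro y
      have h1 : HasDerivAt (fun x : ℝ => x * Real.cosh x - Real.sinh x)
          (1 * Real.cosh y + y * Real.sinh y - Real.cosh y) y :=
        ((hasDerivAt_id y).mul (Real.hasDerivAt_cosh y)).sub (Real.hasDerivAt_sinh y)
      rw [h1.deriv]
      have : 0 ≤ y * Real.sinh y := by
        rcases le_or_gt 0 y with hy | hy
        · exact mul_nonneg hy (Real.sinh_nonneg_iff.mpr hy)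
        · have hsy : Real.sinh y ≤ 0 := by simpa using Real.sinh_le_sinh.mpr hy.le
          nlinarith
      linarith
  have := hmono hx
  simpa using this

/-- The key inequality `(1 + e^{-x}) E(-x) ≤ 1 + e^{-2x}`, i.e. `tanh x ≤ x`. -/
lemma E_key {x : ℝ} (hx : 0 ≤ x) :
    (1 + Real.exp (-x)) * E (-x) ≤ 1 + Real.exp (-x) ^ 2 := by
  unfold E
  split_ifs with h
  · rw [show x = 0 by linarith [neg_eq_zero.mp h]]
    norm_num
  · have hx' : 0 < x := lt_of_le_of_ne hx (fun h' => h (by rw [← h']; ring))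
    have hs := sinh_le_mul_cosh x hx
    rw [Real.sinh_eq, Real.cosh_eq] at hs
    have hy : Real.exp x * Real.exp (-x) = 1 := by
      rw [← Real.exp_add]; simp
    have hy0 : 0 < Real.exp (-x) := Real.exp_pos _
    rw [← mul_div_assoc, div_le_iff_of_neg (by linarith : -x < 0)]
    nlinarith [mul_le_mul_of_nonneg_right hs hy0.le]

set_option maxHeartbeats 1000000 in
/-- Theorem 4.1 (eigenvalue bound): for `0 < Δt < h` and decay rates
`cᵉ, cᵒ ≥ 0`, every eigenvalue of the full-step growth-factor matrix `G` of the
staggered-grid Strang-splitting scheme has modulus at most `1`. -/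
theorem growth_factor_eigenvalue_bound (h Δt k cE cO : ℝ)
    (hh : 0 < h) (hΔt : 0 < Δt) (hΔth : Δt < h) (hcE : 0 ≤ cE) (hcO : 0 ≤ cO)
    (dE dO : ℝ) (fE fO : ℂ)
    (hdE : dE = Real.exp (-(cE * Δt / 2)))
    (hdO : dO = Real.exp (-(cO * Δt / 2)))
    (hfE : fE = -Complex.I * (Δt / h) * E (-(cE * Δt / 2)) * Real.sin (k * h / 2))
    (hfO : fO = -Complex.I * (Δt / h) * E (-(cO * Δt / 2)) * Real.sin (k * h / 2))
    (G : Matrix (Fin 2) (Fin 2) ℂ)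
    (hG : G = !![(dE : ℂ) ^ 2 + ((dE : ℂ) + 1) * fE * fO, (dO : ℂ) * ((dE : ℂ) + 1) * fE;
                 ((dO : ℂ) + (dE : ℂ) ^ 2) * fO + ((dE : ℂ) + 1) * fE * fO ^ 2,
                 (dO : ℂ) ^ 2 + (dO : ℂ) * ((dE : ℂ) + 1) * fE * fO]) :
    ∀ lam : ℂ, G.charpoly.IsRoot lam → ‖lam‖ ≤ 1 := by
  intro lam hroot
  -- abbreviations
  set xE : ℝ := cE * Δt / 2 with hxE
  set xO : ℝ := cO * Δt / 2 with hxO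
  have hxE0 : 0 ≤ xE := by positivity
  have hxO0 : 0 ≤ xO := by positivity
  set EE : ℝ := E (-xE) with hEE
  set EO : ℝ := E (-xO) with hEO
  set σ : ℝ := Real.sin (k * h / 2) with hσ
  set sE : ℝ := (Δt / h) * EE * σ with hsE
  set sO : ℝ := (Δt / h) * EO * σ with hsO
  -- fE, fO as -I times reals
  have hfE' : fE = -Complex.I * (sE : ℂ) := by
    rw [hfE, hsE]; push_cast; ring
  have hfO' : fO = -Complex.I * (sO : ℂ) := by
    rw [hfO, hsO]; push_cast; ring
  have hff : fE * fO = -((sE * sO : ℝ) : ℂ) := by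
    rw [hfE', hfO']; push_cast
    have : Complex.I * Complex.I = -1 := Complex.I_mul_I
    ring_nf
    rw [Complex.I_sq]
    ring
  -- basic positivity facts
  have hdE1 : dE ≤ 1 := by rw [hdE]; exact Real.exp_le_one_iff.mpr (by linarith)
  have hdO1 : dO ≤ 1 := by rw [hdO]; exact Real.exp_le_one_iff.mpr (by linarith)
  have hdE0 : 0 < dE := hdE ▸ Real.exp_pos _
  have hdO0 : 0 < dO := hdO ▸ Real.exp_pos _
  have hEE0 : 0 ≤ EE := E_nonneg hxE0
  have hEO0 : 0 ≤ EO := E_nonneg hxO0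
  -- the real trace and determinant
  set T : ℝ := dE ^ 2 + dO ^ 2 - (dE + 1) * (dO + 1) * (sE * sO) with hT
  set D : ℝ := (dE * dO) ^ 2 with hDdef
  -- the root equation
  have heval : lam ^ 2 - (T : ℂ) * lam + (D : ℂ) = 0 := by
    have h0 := hroot
    rw [Polynomial.IsRoot, charpoly_eval_fin_two, hG] at h0
    simp only [Matrix.cons_val', Matrix.cons_val_zero, Matrix.cons_val_one, Matrix.head_cons,
      Matrix.head_fin_const, Matrix.empty_val', Matrix.cons_val_fin_one, Matrix.of_apply] at h0
    have hsum' : ((dE:ℂ)^2 + ((dE:ℂ)+1)*fE*fO) + ((dO:ℂ)^2 + (dO:ℂ)*((dE:ℂ)+1)*fE*fO) = (T:ℂ) := by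
      rw [hfE', hfO', hT]
      push_cast
      linear_combination (((dE:ℂ)+1)*((dO:ℂ)+1)*((sE:ℂ)*(sO:ℂ))) * Complex.I_sq
    have hpr' : ((dE:ℂ)^2 + ((dE:ℂ)+1)*fE*fO) * ((dO:ℂ)^2 + (dO:ℂ)*((dE:ℂ)+1)*fE*fO)
        - ((dO:ℂ)*((dE:ℂ)+1)*fE) * (((dO:ℂ)+(dE:ℂ)^2)*fO + ((dE:ℂ)+1)*fE*fO^2) = (D:ℂ) := by
      rw [hDdef]
      push_cast
      ring
    linear_combination h0 + lam * hsum' - hpr'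
  -- inequalities for the Schur criterion
  have hD1 : D ≤ 1 := by
    rw [hDdef]
    nlinarith [mul_pos hdE0 hdO0, mul_le_one₀ hdE1 hdO0.le hdO1]
  have hkey : (dE + 1) * (dO + 1) * (sE * sO) ≤ (1 + dE ^ 2) * (1 + dO ^ 2) := by
    have hAE : (1 + dE) * EE ≤ 1 + dE ^ 2 := by
      have := E_key hxE0
      rw [← hdE] at this
      calc (1 + dE) * EE = (1 + Real.exp (-xE)) * E (-xE) := by rw [hdE, hEE]
        _ ≤ 1 + Real.exp (-xE) ^ 2 := E_key hxE0
        _ = 1 + dE ^ 2 := by rw [hdE]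
    have hAO : (1 + dO) * EO ≤ 1 + dO ^ 2 := by
      calc (1 + dO) * EO = (1 + Real.exp (-xO)) * E (-xO) := by rw [hdO, hEO]
        _ ≤ 1 + Real.exp (-xO) ^ 2 := E_key hxO0
        _ = 1 + dO ^ 2 := by rw [hdO]
    have hr : (Δt / h) ^ 2 ≤ 1 := by
      have h1 : Δt / h ≤ 1 := (div_le_one hh).mpr hΔth.le
      have h2 : 0 ≤ Δt / h := by positivity
      nlinarith
    have hσ2 : σ ^ 2 ≤ 1 := by
      have := Real.neg_one_le_sin (k * h / 2)
      have := Real.sin_le_one (k * h / 2)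
      rw [hσ]; nlinarith
    have hC : (Δt / h) ^ 2 * σ ^ 2 ≤ 1 := by
      have := mul_le_mul hr hσ2 (sq_nonneg σ) zero_le_one
      simpa using this
    have hC0 : 0 ≤ (Δt / h) ^ 2 * σ ^ 2 := by positivity
    have hAE0 : 0 ≤ (1 + dE) * EE := mul_nonneg (by linarith) hEE0
    have hAO0 : 0 ≤ (1 + dO) * EO := mul_nonneg (by linarith) hEO0
    have hrw : (dE + 1) * (dO + 1) * (sE * sO)
        = ((1 + dE) * EE) * ((1 + dO) * EO) * ((Δt / h) ^ 2 * σ ^ 2) := by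
      rw [hsE, hsO]; ring
    rw [hrw]
    calc ((1 + dE) * EE) * ((1 + dO) * EO) * ((Δt / h) ^ 2 * σ ^ 2)
        ≤ ((1 + dE) * EE) * ((1 + dO) * EO) * 1 :=
          mul_le_mul_of_nonneg_left hC (mul_nonneg hAE0 hAO0)
      _ = ((1 + dE) * EE) * ((1 + dO) * EO) := by ring
      _ ≤ (1 + dE ^ 2) * (1 + dO ^ 2) := by
          have hpos : (0:ℝ) ≤ 1 + dE ^ 2 := by positivity
          exact mul_le_mul hAE hAO hAO0 hpos
  have hss0 : 0 ≤ sE * sO := by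
    have : sE * sO = (Δt / h) ^ 2 * EE * EO * σ ^ 2 := by rw [hsE, hsO]; ring
    rw [this]; positivity
  have hT1 : T ≤ 1 + D := by
    rw [hT, hDdef]
    nlinarith [mul_nonneg (mul_nonneg (by linarith : (0:ℝ) ≤ dE + 1) (by linarith : (0:ℝ) ≤ dO + 1)) hss0,
      mul_nonneg (by nlinarith : (0:ℝ) ≤ 1 - dE ^ 2) (by nlinarith : (0:ℝ) ≤ 1 - dO ^ 2)]
  have hT2 : -(1 + D) ≤ T := by
    rw [hT, hDdef]
    nlinarith [hkey]
  exact quad_root_bound T D hD1 hT1 hT2 lam heval
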